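/- Let X, X' be ρ-indistinguishable random variables over X and E an event with P(X ∈ E) ≥ q and P(X' ∈ E) ≥ q for some q > 0. Then X|_E and X'|_E are (ρ/q)-indistinguishable. -/

import Mathlib

open Finset

/-- Rényi divergence of order `α` between two discrete distributions on a finite type. -/
noncomputable def renyiDiv {X : Type*} [Fintype X] (α : ℝ) (P Q : X → ℝ) : ℝ :=
  (α - 1)⁻¹ * Real.log (∑ x, (P x) ^ α / (Q x) ^ (α - 1))

/-- Conditioning a discrete distribution on an event. -/
noncomputable def condOn {X : Type*} [Fintype X] [DecidableEq X]
    (P : X → ℝ) (E : Finset X) : X → ℝ :=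
  fun x => if x ∈ E then P x / ∑ y ∈ E, P y else 0

/-- `ρ`-indistinguishability: all Rényi divergences of order `α` (both directions)
are at most `ρα`. -/
def Indist {X : Type*} [Fintype X] (ρ : ℝ) (P Q : X → ℝ) : Prop :=
  ∀ α : ℝ, 1 < α → renyiDiv α P Q ≤ ρ * α ∧ renyiDiv α Q P ≤ ρ * α

lemma div_rpow_eq {α : ℝ} (hα : 1 < α) (u v : ℝ) (hv : 0 ≤ v) :
    u ^ α / v ^ (α - 1) = u ^ α * v ^ (1 - α) := by
  rcases hv.eq_or_lt with h | h
  · rw [← h, Real.zero_rpow (by linarith), Real.zero_rpow (by linarith), div_zero, mul_zero]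
  · rw [show (1 - α) = -(α - 1) by ring, Real.rpow_neg h.le, div_eq_mul_inv]

lemma holder_aux {X : Type*} [Fintype X] (s : Finset X) (u v : X → ℝ)
    (hu : ∀ x, 0 ≤ u x) (hv : ∀ x, 0 ≤ v x)
    (hac : ∀ x ∈ s, v x = 0 → u x = 0) {α : ℝ} (hα : 1 < α) :
    (∑ x ∈ s, u x) ^ α * (∑ x ∈ s, v x) ^ (1 - α) ≤ ∑ x ∈ s, u x ^ α * v x ^ (1 - α) := by
  have hα0 : (0:ℝ) < α := by linarith
  have hU0 : 0 ≤ ∑ x ∈ s, u x := sum_nonneg fun x _ => hu x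
  have hV0 : 0 ≤ ∑ x ∈ s, v x := sum_nonneg fun x _ => hv x
  have hR0 : 0 ≤ ∑ x ∈ s, u x ^ α * v x ^ (1 - α) :=
    sum_nonneg fun x _ => mul_nonneg (Real.rpow_nonneg (hu x) _) (Real.rpow_nonneg (hv x) _)
  rcases hV0.eq_or_lt with hV | hV
  · have hvz : ∀ x ∈ s, v x = 0 :=
      (Finset.sum_eq_zero_iff_of_nonneg (fun x _ => hv x)).mp hV.symm
    have hU : ∑ x ∈ s, u x = 0 := sum_eq_zero fun x hx => hac x hx (hvz x hx)
    rw [hU, Real.zero_rpow hα0.ne', zero_mul]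
    exact hR0
  · set β : ℝ := (α - 1) / α with hβdef
    have hβ0 : 0 < β := div_pos (by linarith) hα0
    have hpq : Real.HolderConjugate α (α / (α - 1)) :=
      Real.HolderConjugate.conjExponent hα
    set f : X → ℝ := fun x => u x * v x ^ (-β) with hfdef
    set g : X → ℝ := fun x => v x ^ β with hgdef
    have key := Real.inner_le_Lp_mul_Lq_of_nonneg (s := s) (f := f) (g := g) hpq
      (fun x _ => mul_nonneg (hu x) (Real.rpow_nonneg (hv x) _))
      (fun x _ => Real.rpow_nonneg (hv x) _)
    have h1 : ∑ x ∈ s, f x * g x = ∑ x ∈ s, u x := by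
      refine sum_congr rfl fun x hx => ?_
      rcases (hv x).eq_or_lt with h | h
      · rw [hfdef, hgdef]
        simp only [← h, Real.zero_rpow hβ0.ne', Real.zero_rpow (neg_ne_zero.mpr hβ0.ne'),
          mul_zero, zero_mul]
        exact (hac x hx h.symm).symm
      · rw [hfdef, hgdef]
        simp only [mul_assoc, ← Real.rpow_add h]
        norm_num
    have h2 : ∑ x ∈ s, f x ^ α = ∑ x ∈ s, u x ^ α * v x ^ (1 - α) := by
      refine sum_congr rfl fun x hx => ?_
      rw [hfdef]
      simp only
      rw [Real.mul_rpow (hu x) (Real.rpow_nonneg (hv x) _), ← Real.rpow_mul (hv x)]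
      congr 1
      rw [hβdef]
      field_simp
      congr 1; ring
    have h3 : ∑ x ∈ s, g x ^ (α / (α - 1)) = ∑ x ∈ s, v x := by
      refine sum_congr rfl fun x hx => ?_
      rw [hgdef]
      simp only
      rw [← Real.rpow_mul (hv x)]
      have hne : α - 1 ≠ 0 := by linarith
      rw [show β * (α / (α - 1)) = 1 by rw [hβdef]; field_simp]
      exact Real.rpow_one _
    rw [h1, h2, h3] at key
    have h4 : 1 / (α / (α - 1)) = β := by rw [hβdef]; field_simp
    rw [h4] at key
    have h5 : (∑ x ∈ s, u x) ^ α ≤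
        ((∑ x ∈ s, u x ^ α * v x ^ (1 - α)) ^ (1 / α) * (∑ x ∈ s, v x) ^ β) ^ α :=
      Real.rpow_le_rpow hU0 key hα0.le
    rw [Real.mul_rpow (Real.rpow_nonneg hR0 _) (Real.rpow_nonneg hV0 _),
      ← Real.rpow_mul hR0, ← Real.rpow_mul hV0,
      show 1 / α * α = 1 by field_simp, show β * α = α - 1 by rw [hβdef]; field_simp,
      Real.rpow_one] at h5
    calc (∑ x ∈ s, u x) ^ α * (∑ x ∈ s, v x) ^ (1 - α)
        ≤ ((∑ x ∈ s, u x ^ α * v x ^ (1 - α)) * (∑ x ∈ s, v x) ^ (α - 1)) *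
            (∑ x ∈ s, v x) ^ (1 - α) :=
          mul_le_mul_of_nonneg_right h5 (Real.rpow_nonneg hV0 _)
      _ = ∑ x ∈ s, u x ^ α * v x ^ (1 - α) := by
          rw [mul_assoc, ← Real.rpow_add hV, show α - 1 + (1 - α) = 0 by ring,
            Real.rpow_zero, mul_one]

lemma key_bound {X : Type*} [Fintype X] [DecidableEq X]
    {ρ q α : ℝ} (hq : 0 < q) (hα : 1 < α) (P Q : X → ℝ)
    (hP : ∀ x, 0 ≤ P x) (hQ : ∀ x, 0 ≤ Q x)
    (hP1 : ∑ x, P x = 1) (hQ1 : ∑ x, Q x = 1)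
    (hac : ∀ x, Q x = 0 ↔ P x = 0)
    (E : Finset X) (hPE : q ≤ ∑ x ∈ E, P x) (hQE : q ≤ ∑ x ∈ E, Q x)
    (hD : renyiDiv α P Q ≤ ρ * α) :
    renyiDiv α (condOn P E) (condOn Q E) ≤ ρ / q * α := by
  have hα1 : (0:ℝ) < α - 1 := by linarith
  have hα0 : (0:ℝ) < α := by linarith
  set p := ∑ x ∈ E, P x with hpdef
  set r := ∑ x ∈ E, Q x with hrdef
  have hp0 : 0 < p := lt_of_lt_of_le hq hPE
  have hr0 : 0 < r := lt_of_lt_of_le hq hQE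
  have hpc : ∑ x ∈ Eᶜ, P x = 1 - p := by
    have h := Finset.sum_add_sum_compl E P
    rw [hP1] at h; linarith
  have hrc : ∑ x ∈ Eᶜ, Q x = 1 - r := by
    have h := Finset.sum_add_sum_compl E Q
    rw [hQ1] at h; linarith
  have hp1 : p ≤ 1 := by
    have h0 : 0 ≤ ∑ x ∈ Eᶜ, P x := sum_nonneg fun x _ => hP x
    linarith [hpc]
  have hr1 : r ≤ 1 := by
    have h0 : 0 ≤ ∑ x ∈ Eᶜ, Q x := sum_nonneg fun x _ => hQ x
    linarith [hrc]
  -- rewrite the divergence sums in multiplicative form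
  have hsum_eq : ∀ (u v : X → ℝ), (∀ x, 0 ≤ v x) →
      ∑ x, u x ^ α / v x ^ (α - 1) = ∑ x, u x ^ α * v x ^ (1 - α) :=
    fun u v hv => sum_congr rfl fun x _ => div_rpow_eq hα (u x) (v x) (hv x)
  set S := ∑ x, P x ^ α * Q x ^ (1 - α) with hSdef
  have hS1 : (1:ℝ) ≤ S := by
    have h := holder_aux univ P Q hP hQ (fun x _ hx => (hac x).mp hx) hα
    rw [show ∑ x ∈ univ, P x = 1 from hP1, show ∑ x ∈ univ, Q x = 1 from hQ1,
      Real.one_rpow, Real.one_rpow, one_mul] at h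
    exact h
  have hS0 : 0 < S := lt_of_lt_of_le one_pos hS1
  have hDS : (α - 1)⁻¹ * Real.log S ≤ ρ * α := by
    have h := hD
    unfold renyiDiv at h
    rw [hsum_eq P Q hQ] at h
    exact h
  have hρα : 0 ≤ ρ * α :=
    le_trans (mul_nonneg (inv_nonneg.mpr hα1.le) (Real.log_nonneg hS1)) hDS
  have hlogS : Real.log S ≤ (α - 1) * (ρ * α) := by
    have h := mul_le_mul_of_nonneg_left hDS hα1.le
    rw [← mul_assoc, mul_inv_cancel₀ hα1.ne', one_mul] at h
    exact h
  set SE := ∑ x ∈ E, P x ^ α * Q x ^ (1 - α) with hSEdef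
  set SEc := ∑ x ∈ Eᶜ, P x ^ α * Q x ^ (1 - α) with hSEcdef
  have hsplit : SE + SEc = S := Finset.sum_add_sum_compl E _
  have hSEc : (1 - p) ^ α * (1 - r) ^ (1 - α) ≤ SEc := by
    have h := holder_aux Eᶜ P Q hP hQ (fun x _ hx => (hac x).mp hx) hα
    rw [hpc, hrc] at h
    exact h
  have hSEc0 : 0 ≤ SEc :=
    sum_nonneg fun x _ => mul_nonneg (Real.rpow_nonneg (hP x) _) (Real.rpow_nonneg (hQ x) _)
  have hSEpos : 0 < SE := by
    have hex : ∃ x ∈ E, 0 < P x := by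
      by_contra h
      push_neg at h
      have : p ≤ 0 := sum_nonpos fun x hx => h x hx
      linarith
    obtain ⟨x0, hx0E, hx0⟩ := hex
    refine sum_pos' (fun x _ =>
      mul_nonneg (Real.rpow_nonneg (hP x) _) (Real.rpow_nonneg (hQ x) _)) ⟨x0, hx0E, ?_⟩
    have hQx : 0 < Q x0 := by
      rcases (hQ x0).eq_or_lt with h | h
      · exact absurd ((hac x0).mp h.symm) hx0.ne'
      · exact h
    exact mul_pos (Real.rpow_pos_of_pos hx0 _) (Real.rpow_pos_of_pos hQx _)
  -- the conditional divergence sum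
  have hcond : ∑ x, (condOn P E x) ^ α / (condOn Q E x) ^ (α - 1)
      = SE * (r ^ (α - 1) / p ^ α) := by
    rw [← Finset.sum_add_sum_compl E]
    have h2 : ∑ x ∈ Eᶜ, (condOn P E x) ^ α / (condOn Q E x) ^ (α - 1) = 0 :=
      sum_eq_zero fun x hx => by
        have hxE : x ∉ E := by simpa using hx
        simp [condOn, hxE, Real.zero_rpow hα0.ne']
    rw [h2, add_zero, hSEdef, sum_mul]
    refine sum_congr rfl fun x hx => ?_
    simp only [condOn, if_pos hx, ← hpdef, ← hrdef]
    rw [Real.div_rpow (hP x) hp0.le, Real.div_rpow (hQ x) hr0.le]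
    have hpα : (p:ℝ) ^ α ≠ 0 := (Real.rpow_pos_of_pos hp0 _).ne'
    have hrα : (r:ℝ) ^ (α - 1) ≠ 0 := (Real.rpow_pos_of_pos hr0 _).ne'
    rcases (hQ x).eq_or_lt with h | h
    · have hPx : P x = 0 := (hac x).mp h.symm
      rw [hPx, ← h, Real.zero_rpow hα0.ne', Real.zero_rpow (by linarith : (1:ℝ) - α ≠ 0)]
      simp [Real.zero_rpow hα1.ne']
    · have hQα : Q x ^ (α - 1) ≠ 0 := (Real.rpow_pos_of_pos h _).ne'
      rw [show (1:ℝ) - α = -(α - 1) by ring, Real.rpow_neg (hQ x)]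
      field_simp
  set T := SE * (r ^ (α - 1) / p ^ α) with hTdef
  have hT0 : 0 < T := mul_pos hSEpos
    (div_pos (Real.rpow_pos_of_pos hr0 _) (Real.rpow_pos_of_pos hp0 _))
  -- main estimate : T ^ p ≤ S
  have hTpS : T ^ p ≤ S := by
    rcases eq_or_lt_of_le hp1 with hpe | hpl
    · -- p = 1
      have hral : r ^ (α - 1) ≤ 1 := Real.rpow_le_one hr0.le hr1 hα1.le
      have hT : T ≤ S := by
        rw [hTdef, hpe, Real.one_rpow, div_one]
        calc SE * r ^ (α - 1) ≤ SE * 1 :=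
              mul_le_mul_of_nonneg_left hral hSEpos.le
          _ = SE := mul_one _
          _ ≤ S := by linarith
      rw [hpe, Real.rpow_one]
      exact hT
    · -- p < 1
      have hrl : r < 1 := by
        rcases eq_or_lt_of_le hr1 with hre | h
        · exfalso
          have hQc : ∑ x ∈ Eᶜ, Q x = 0 := by rw [hrc, ← hre]; ring
          have hQz : ∀ x ∈ Eᶜ, Q x = 0 :=
            (Finset.sum_eq_zero_iff_of_nonneg (fun x _ => hQ x)).mp hQc
          have hPz : ∑ x ∈ Eᶜ, P x = 0 :=
            sum_eq_zero fun x hx => (hac x).mp (hQz x hx)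
          rw [hpc] at hPz
          linarith
        · exact h
      have h1p : (0:ℝ) < 1 - p := by linarith
      have h1r : (0:ℝ) < 1 - r := by linarith
      set a := SE / p with hadef
      set b := (1 - p) ^ (α - 1) * (1 - r) ^ (1 - α) with hbdef
      have ha0 : 0 < a := div_pos hSEpos hp0
      have hb0 : 0 < b :=
        mul_pos (Real.rpow_pos_of_pos h1p _) (Real.rpow_pos_of_pos h1r _)
      have hstepA : T ^ p ≤ a ^ p * b ^ (1 - p) := by
        rw [← Real.log_le_log_iff (Real.rpow_pos_of_pos hT0 _)
          (mul_pos (Real.rpow_pos_of_pos ha0 _) (Real.rpow_pos_of_pos hb0 _)),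
          Real.log_rpow hT0,
          Real.log_mul (Real.rpow_pos_of_pos ha0 _).ne' (Real.rpow_pos_of_pos hb0 _).ne',
          Real.log_rpow ha0, Real.log_rpow hb0]
        have hlogT : Real.log T = Real.log SE + (α - 1) * Real.log r - α * Real.log p := by
          rw [hTdef, Real.log_mul hSEpos.ne'
            (div_pos (Real.rpow_pos_of_pos hr0 _) (Real.rpow_pos_of_pos hp0 _)).ne',
            Real.log_div (Real.rpow_pos_of_pos hr0 _).ne' (Real.rpow_pos_of_pos hp0 _).ne',
            Real.log_rpow hr0, Real.log_rpow hp0]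
          ring
        have hloga : Real.log a = Real.log SE - Real.log p := by
          rw [hadef, Real.log_div hSEpos.ne' hp0.ne']
        have hlogb : Real.log b = (α - 1) * Real.log (1 - p) + (1 - α) * Real.log (1 - r) := by
          rw [hbdef, Real.log_mul (Real.rpow_pos_of_pos h1p _).ne'
            (Real.rpow_pos_of_pos h1r _).ne', Real.log_rpow h1p, Real.log_rpow h1r]
        rw [hlogT, hloga, hlogb]
        have hKL1 : p * (Real.log r - Real.log p) ≤ r - p := by
          have h := Real.log_le_sub_one_of_pos (div_pos hr0 hp0)
          rw [Real.log_div hr0.ne' hp0.ne'] at h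
          have h2 := mul_le_mul_of_nonneg_left h hp0.le
          have h3 : p * (r / p - 1) = r - p := by field_simp
          linarith
        have hKL2 : (1 - p) * (Real.log (1 - r) - Real.log (1 - p)) ≤ p - r := by
          have h := Real.log_le_sub_one_of_pos (div_pos h1r h1p)
          rw [Real.log_div h1r.ne' h1p.ne'] at h
          have h2 := mul_le_mul_of_nonneg_left h h1p.le
          have h3 : (1 - p) * ((1 - r) / (1 - p) - 1) = p - r := by field_simp; ring
          linarith
        have hKLα : (α - 1) * (p * (Real.log r - Real.log p)
            + (1 - p) * (Real.log (1 - r) - Real.log (1 - p))) ≤ 0 :=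
          mul_nonpos_of_nonneg_of_nonpos hα1.le (by linarith)
        have hid : p * (Real.log SE + (α - 1) * Real.log r - α * Real.log p)
            - (p * (Real.log SE - Real.log p)
              + (1 - p) * ((α - 1) * Real.log (1 - p) + (1 - α) * Real.log (1 - r)))
            = (α - 1) * (p * (Real.log r - Real.log p)
              + (1 - p) * (Real.log (1 - r) - Real.log (1 - p))) := by ring
        linarith [hKLα, hid]
      have hstepB : a ^ p * b ^ (1 - p) ≤ p * a + (1 - p) * b :=
        Real.geom_mean_le_arith_mean2_weighted hp0.le h1p.le ha0.le hb0.le (by ring)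
      have heq : p * a + (1 - p) * b = SE + (1 - p) ^ α * (1 - r) ^ (1 - α) := by
        rw [hadef, hbdef, mul_div_cancel₀ _ hp0.ne']
        have hpow : (1 - p) * (1 - p) ^ (α - 1) = (1 - p) ^ α := by
          have h := Real.rpow_add h1p 1 (α - 1)
          rw [Real.rpow_one] at h
          have he : (1:ℝ) + (α - 1) = α := by ring
          rw [he] at h
          exact h.symm
        rw [← mul_assoc, hpow]
      calc T ^ p ≤ a ^ p * b ^ (1 - p) := hstepA
        _ ≤ p * a + (1 - p) * b := hstepB
        _ = SE + (1 - p) ^ α * (1 - r) ^ (1 - α) := heq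
        _ ≤ SE + SEc := by linarith
        _ = S := hsplit
  -- conclude
  have hmain : p * Real.log T ≤ (α - 1) * (ρ * α) := by
    have h := (Real.log_le_log_iff (Real.rpow_pos_of_pos hT0 _) hS0).mpr hTpS
    rw [Real.log_rpow hT0] at h
    linarith [hlogS]
  unfold renyiDiv
  rw [hcond]
  have hstep : Real.log T ≤ ((α - 1) * (ρ * α)) / p := by
    rw [le_div_iff₀ hp0]
    linarith
  calc (α - 1)⁻¹ * Real.log T ≤ (α - 1)⁻¹ * (((α - 1) * (ρ * α)) / p) :=
        mul_le_mul_of_nonneg_left hstep (inv_nonneg.mpr hα1.le)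
    _ = (ρ * α) / p := by field_simp
    _ ≤ (ρ * α) / q := div_le_div_of_nonneg_left hρα hq hPE
    _ = ρ / q * α := by ring

/-- zCDP indistinguishability under conditioning: if `X ≈_ρ X'` and the event `E`
has probability at least `q > 0` under both, then `X|_E ≈_{ρ/q} X'|_E`. -/
theorem indist_cond {X : Type*} [Fintype X] [DecidableEq X]
    (ρ q : ℝ) (hq : 0 < q) (P Q : X → ℝ)
    (hP : ∀ x, 0 ≤ P x) (hQ : ∀ x, 0 ≤ Q x)
    (hP1 : ∑ x, P x = 1) (hQ1 : ∑ x, Q x = 1)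
    (hac : ∀ x, Q x = 0 ↔ P x = 0)
    (hind : Indist ρ P Q)
    (E : Finset X) (hPE : q ≤ ∑ x ∈ E, P x) (hQE : q ≤ ∑ x ∈ E, Q x) :
    Indist (ρ / q) (condOn P E) (condOn Q E) := by
  intro α hα
  obtain ⟨h1, h2⟩ := hind α hα
  exact ⟨key_bound hq hα P Q hP hQ hP1 hQ1 hac E hPE hQE h1,
    key_bound hq hα Q P hQ hP hQ1 hP1 (fun x => (hac x).symm) E hQE hPE h2⟩
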